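/- arXiv:1401.0664 — 2 statements merged into one kernel-verified Lean document; each statement's English description precedes it below -/
import Mathlib

section
/- Let σ = (σ_1 ≥ … ≥ σ_{2p}) be a weakly decreasing sequence of real numbers and let S = diag(σ). If a and b are real symmetric p×p matrices with ordered spectra σ_- and σ_+ respectively, and a + b has ordered spectrum ν = (ν_1 ≥ … ≥ ν_p), then there exists a real orthogonal 2p×2p matrix J with J² = −Id such that S + J⁻¹ S J has ordered spectrum ν^{(2)}. -/
open Polynomial in
/-- `μ` (weakly decreasing) is the ordered spectrum of the real matrix `A`:
the characteristic polynomial of `A` is `∏ i (X - μ i)`, i.e. the `μ i` are the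
eigenvalues of `A` with multiplicity, listed in weakly decreasing order. -/
def HasOrdSpecR {n : ℕ} (A : Matrix (Fin n) (Fin n) ℝ) (μ : Fin n → ℝ) : Prop :=
  Antitone μ ∧ A.charpoly = ∏ i, (X - C (μ i))

open Polynomial in
/-- `μ` (weakly decreasing, real) is the ordered spectrum of the complex matrix `A`. -/
def HasOrdSpecC {n : ℕ} (A : Matrix (Fin n) (Fin n) ℂ) (μ : Fin n → ℝ) : Prop :=
  Antitone μ ∧ A.charpoly = ∏ i, (X - C ((μ i : ℂ)))

/-- For `σ = (σ₁ ≥ … ≥ σ_{2p})`, `sminusR σ = σ₋ = (σ₁, σ₃, …, σ_{2p-1})`. -/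
def sminusR {p : ℕ} (σ : Fin (2 * p) → ℝ) : Fin p → ℝ :=
  fun i => σ ⟨2 * i.1, by have := i.2; omega⟩

/-- For `σ = (σ₁ ≥ … ≥ σ_{2p})`, `splusR σ = σ₊ = (σ₂, σ₄, …, σ_{2p})`. -/
def splusR {p : ℕ} (σ : Fin (2 * p) → ℝ) : Fin p → ℝ :=
  fun i => σ ⟨2 * i.1 + 1, by have := i.2; omega⟩

/-- For `ν = (ν₁ ≥ … ≥ ν_p)`, `dupR ν = ν⁽²⁾ = (ν₁, ν₁, ν₂, ν₂, …, ν_p, ν_p)`. -/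
def dupR {p : ℕ} (ν : Fin p → ℝ) : Fin (2 * p) → ℝ :=
  fun i => ν ⟨i.1 / 2, by have := i.2; omega⟩

open Polynomial Matrix


lemma charpoly_diagonal' {n : Type*} [Fintype n] [DecidableEq n] (d : n → ℝ) :
    (Matrix.diagonal d).charpoly = ∏ i, (X - C (d i)) := by
  have h : charmatrix (Matrix.diagonal d) = Matrix.diagonal fun i => X - C (d i) := by
    ext i j
    by_cases hij : i = j
    · subst hij; simp
    · rw [charmatrix_apply_ne _ _ _ hij, Matrix.diagonal_apply_ne _ hij,
        Matrix.diagonal_apply_ne _ hij, map_zero, neg_zero]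
  rw [Matrix.charpoly, h, Matrix.det_diagonal]

lemma charpoly_mul_mul {n : Type*} [Fintype n] [DecidableEq n] (P Q M : Matrix n n ℝ)
    (hPQ : Q * P = 1) : (P * M * Q).charpoly = M.charpoly := by
  have hPQ' : P * Q = 1 := mul_eq_one_comm.mpr hPQ
  have h1 : charmatrix (P * M * Q) = P.map C * charmatrix M * Q.map C := by
    rw [charmatrix, charmatrix, Matrix.mul_sub, Matrix.sub_mul]
    congr 1
    · symm
      have hc : Matrix.scalar n (X : ℝ[X]) * P.map C = P.map C * Matrix.scalar n (X : ℝ[X]) :=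
        (Matrix.scalar_commute (X : ℝ[X]) (fun r => Commute.all _ _) (P.map C)).eq
      calc P.map C * Matrix.scalar n (X : ℝ[X]) * Q.map C
          = Matrix.scalar n (X : ℝ[X]) * (P.map C * Q.map C) := by rw [← hc, Matrix.mul_assoc]
        _ = Matrix.scalar n (X : ℝ[X]) := by
            rw [← Matrix.map_mul, hPQ', Matrix.map_one _ (map_zero _) (map_one _), Matrix.mul_one]
    · simp only [RingHom.mapMatrix_apply, Matrix.map_mul]
  rw [Matrix.charpoly, Matrix.charpoly, h1, Matrix.det_mul, Matrix.det_mul]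
  have h2 : (P.map (C : ℝ →+* ℝ[X])).det * (Q.map C).det = 1 := by
    rw [← Matrix.det_mul, ← Matrix.map_mul, hPQ', Matrix.map_one _ (map_zero _) (map_one _),
      Matrix.det_one]
  calc (P.map (C : ℝ →+* ℝ[X])).det * (charmatrix M).det * (Q.map C).det
      = (charmatrix M).det * ((P.map C).det * (Q.map C).det) := by ring
    _ = (charmatrix M).det := by rw [h2, mul_one]


lemma exists_comp_perm_eq {n : ℕ} {f g : Fin n → ℝ}
    (h : (∏ i, (X - C (f i))) = ∏ i, (X - C (g i))) :
    ∃ π : Equiv.Perm (Fin n), f ∘ π = g := by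
  have hms : Multiset.map f Finset.univ.val = Multiset.map g Finset.univ.val := by
    have h1 : ((Multiset.map f Finset.univ.val).map fun a => X - C a).prod
        = ((Multiset.map g Finset.univ.val).map fun a => X - C a).prod := by
      rw [Multiset.map_map, Multiset.map_map]; exact h
    have := congrArg Polynomial.roots h1
    rwa [Polynomial.roots_multiset_prod_X_sub_C, Polynomial.roots_multiset_prod_X_sub_C] at this
  have key : ∀ h' : Fin n → ℝ,
      Multiset.map (h' ∘ ⇑(Tuple.sort h')) Finset.univ.val = Multiset.map h' Finset.univ.val := by
    intro h'
    calc Multiset.map (h' ∘ ⇑(Tuple.sort h')) Finset.univ.val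
        = Multiset.map h' (Multiset.map (⇑(Tuple.sort h')) Finset.univ.val) :=
          (Multiset.map_map _ _ _).symm
      _ = Multiset.map h' Finset.univ.val := by rw [Multiset.map_univ_val_equiv]
  have hcoe : ∀ h' : Fin n → ℝ, (↑(List.ofFn (h' ∘ ⇑(Tuple.sort h'))) : Multiset ℝ)
      = Multiset.map (h' ∘ ⇑(Tuple.sort h')) Finset.univ.val := by
    intro h'
    rw [List.ofFn_eq_map, Fin.univ_def]
    rfl
  have hlist : List.ofFn (f ∘ ⇑(Tuple.sort f)) = List.ofFn (g ∘ ⇑(Tuple.sort g)) := by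
    apply List.Perm.eq_of_sortedLE ((Tuple.monotone_sort f).sortedLE_ofFn)
      ((Tuple.monotone_sort g).sortedLE_ofFn)
    rw [← Multiset.coe_eq_coe, hcoe f, hcoe g, key f, key g, hms]
  have heq : f ∘ ⇑(Tuple.sort f) = g ∘ ⇑(Tuple.sort g) := List.ofFn_inj.mp hlist
  refine ⟨(Tuple.sort g).symm.trans (Tuple.sort f), funext fun x => ?_⟩
  have := congrFun heq ((Tuple.sort g).symm x)
  simpa using this


lemma symm_spectral {m : ℕ} (A : Matrix (Fin m) (Fin m) ℝ) (hA : A.IsSymm)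
    (d : Fin m → ℝ) (hd : A.charpoly = ∏ i, (X - C (d i))) :
    ∃ u : Matrix (Fin m) (Fin m) ℝ, u * uᵀ = 1 ∧ uᵀ * u = 1 ∧
      A = u * Matrix.diagonal d * uᵀ := by
  have hH : A.IsHermitian := by
    rw [Matrix.IsHermitian, Matrix.conjTranspose_eq_transpose_of_trivial]; exact hA
  set U : Matrix (Fin m) (Fin m) ℝ := (hH.eigenvectorUnitary : Matrix (Fin m) (Fin m) ℝ) with hUdef
  have hstar : star U = Uᵀ := by
    rw [Matrix.star_eq_conjTranspose, Matrix.conjTranspose_eq_transpose_of_trivial]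
  have hU1 : U * Uᵀ = 1 := by
    rw [← hstar]; exact (Matrix.mem_unitaryGroup_iff).mp hH.eigenvectorUnitary.2
  have hU2 : Uᵀ * U = 1 := by
    rw [← hstar]; exact (Matrix.mem_unitaryGroup_iff').mp hH.eigenvectorUnitary.2
  have hofReal : (RCLike.ofReal ∘ hH.eigenvalues : Fin m → ℝ) = hH.eigenvalues := by
    funext i; simp
  have hspec : A = U * Matrix.diagonal hH.eigenvalues * Uᵀ := by
    have := hH.spectral_theorem
    rwa [Unitary.conjStarAlgAut_apply, ← hUdef, hstar, hofReal] at this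
  have hchar : (∏ i, (X - C (hH.eigenvalues i))) = ∏ i, (X - C (d i)) := by
    rw [← hd]
    conv_rhs => rw [hspec]
    rw [charpoly_mul_mul U Uᵀ _ hU2, charpoly_diagonal']
  obtain ⟨π, hπ⟩ := exists_comp_perm_eq hchar
  have hw1 : U.submatrix id ⇑π * (U.submatrix id ⇑π)ᵀ = 1 := by
    rw [Matrix.transpose_submatrix, Matrix.submatrix_mul_equiv U Uᵀ id π id, hU1,
      Matrix.submatrix_id_id]
  refine ⟨U.submatrix id ⇑π, hw1, mul_eq_one_comm.mp hw1, ?_⟩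
  · rw [show Matrix.diagonal d = (Matrix.diagonal hH.eigenvalues).submatrix ⇑π ⇑π by
      rw [Matrix.submatrix_diagonal_equiv, hπ]]
    rw [Matrix.transpose_submatrix,
      Matrix.submatrix_mul_equiv U (Matrix.diagonal hH.eigenvalues) id π π,
      Matrix.submatrix_mul_equiv (U * Matrix.diagonal hH.eigenvalues) Uᵀ id π id,
      Matrix.submatrix_id_id]
    exact hspec


/-- The interleaving equivalence `Fin p ⊕ Fin p ≃ Fin (2*p)`,
`inl i ↦ 2i`, `inr i ↦ 2i+1`. -/
def interEquiv (p : ℕ) : Fin p ⊕ Fin p ≃ Fin (2 * p) where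
  toFun := Sum.elim (fun i => ⟨2 * i.1, by have := i.2; omega⟩)
    (fun i => ⟨2 * i.1 + 1, by have := i.2; omega⟩)
  invFun := fun j => if j.1 % 2 = 0 then Sum.inl ⟨j.1 / 2, by have := j.2; omega⟩
    else Sum.inr ⟨j.1 / 2, by have := j.2; omega⟩
  left_inv := by
    rintro (i | i)
    · simp only [Sum.elim_inl]
      refine (if_pos (show 2 * i.1 % 2 = 0 by omega)).trans ?_
      exact congrArg Sum.inl (Fin.ext (show 2 * i.1 / 2 = i.1 by omega))
    · simp only [Sum.elim_inr]
      refine (if_neg (show ¬ (2 * i.1 + 1) % 2 = 0 by omega)).trans ?_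
      exact congrArg Sum.inr (Fin.ext (show (2 * i.1 + 1) / 2 = i.1 by omega))
  right_inv := by
    intro j
    dsimp only
    split_ifs with hj
    · exact Fin.ext (show 2 * (j.1 / 2) = j.1 by omega)
    · exact Fin.ext (show 2 * (j.1 / 2) + 1 = j.1 by omega)

lemma interEquiv_inl {p : ℕ} (i : Fin p) :
    ((interEquiv p (Sum.inl i)) : Fin (2 * p)).1 = 2 * i.1 := rfl

lemma interEquiv_inr {p : ℕ} (i : Fin p) :
    ((interEquiv p (Sum.inr i)) : Fin (2 * p)).1 = 2 * i.1 + 1 := rfl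

open Matrix in
/-- Let `σ = (σ₁ ≥ … ≥ σ_{2p})` be real, `S = diag σ`.  If
`a, b` are real symmetric `p×p` matrices with ordered spectra `σ₋, σ₊` and `a + b`
has ordered spectrum `ν`, then there is a complex structure `J` (real orthogonal
with `J² = -Id`) such that `S + J⁻¹ S J` has ordered spectrum `ν⁽²⁾`. -/
theorem exists_complex_structure_realizing (p : ℕ)
    (σ : Fin (2 * p) → ℝ) (hσ : Antitone σ)
    (a b : Matrix (Fin p) (Fin p) ℝ) (ha : a.IsSymm) (hb : b.IsSymm)
    (hsa : HasOrdSpecR a (sminusR σ)) (hsb : HasOrdSpecR b (splusR σ))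
    (ν : Fin p → ℝ) (hν : HasOrdSpecR (a + b) ν) :
    ∃ J : Matrix (Fin (2 * p)) (Fin (2 * p)) ℝ, Jᵀ * J = 1 ∧ J * J = -1 ∧
      HasOrdSpecR (Matrix.diagonal σ + J⁻¹ * Matrix.diagonal σ * J) (dupR ν) := by
  obtain ⟨hν_anti, hν_char⟩ := hν
  obtain ⟨u, hu1, hu2, hau⟩ := symm_spectral a ha _ hsa.2
  obtain ⟨v, hv1, hv2, hbv⟩ := symm_spectral b hb _ hsb.2
  set A := Matrix.diagonal (sminusR σ) with hA
  set B := Matrix.diagonal (splusR σ) with hB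
  set R := vᵀ * u with hRdef
  have hRT : Rᵀ = uᵀ * v := by rw [hRdef, Matrix.transpose_mul, Matrix.transpose_transpose]
  have hR1 : Rᵀ * R = 1 := by
    rw [hRT, hRdef]
    calc uᵀ * v * (vᵀ * u) = uᵀ * (v * (vᵀ * u)) := by simp only [Matrix.mul_assoc]
      _ = 1 := by rw [← Matrix.mul_assoc v, hv1, Matrix.one_mul, hu2]
  have hR2 : R * Rᵀ = 1 := by
    rw [hRT, hRdef]
    calc vᵀ * u * (uᵀ * v) = vᵀ * (u * (uᵀ * v)) := by simp only [Matrix.mul_assoc]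
      _ = 1 := by rw [← Matrix.mul_assoc u, hu1, Matrix.one_mul, hv2]
  have hkey : uᵀ * (a + b) * u = A + Rᵀ * B * R := by
    rw [hau, hbv, Matrix.mul_add, Matrix.add_mul]
    congr 1
    · calc uᵀ * (u * A * uᵀ) * u = uᵀ * u * A * (uᵀ * u) := by simp only [Matrix.mul_assoc]
        _ = A := by rw [hu2, Matrix.one_mul, Matrix.mul_one]
    · calc uᵀ * (v * B * vᵀ) * u = uᵀ * v * B * (vᵀ * u) := by simp only [Matrix.mul_assoc]
        _ = Rᵀ * B * R := by rw [hRT, hRdef]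
  have hcp1 : (A + Rᵀ * B * R).charpoly = ∏ i, (Polynomial.X - Polynomial.C (ν i)) := by
    rw [← hkey, charpoly_mul_mul uᵀ u _ hu1, hν_char]
  have hcp2 : (B + R * A * Rᵀ).charpoly = ∏ i, (Polynomial.X - Polynomial.C (ν i)) := by
    have hbx : B + R * A * Rᵀ = R * (A + Rᵀ * B * R) * Rᵀ := by
      have h2 : R * (Rᵀ * B * R) * Rᵀ = B := by
        calc R * (Rᵀ * B * R) * Rᵀ = R * Rᵀ * B * (R * Rᵀ) := by simp only [Matrix.mul_assoc]
          _ = B := by rw [hR2, Matrix.one_mul, Matrix.mul_one]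
      rw [Matrix.mul_add, Matrix.add_mul, h2, add_comm]
    rw [hbx, charpoly_mul_mul R Rᵀ _ hR1, hcp1]
  set e := interEquiv p with he
  set J' : Matrix (Fin p ⊕ Fin p) (Fin p ⊕ Fin p) ℝ := Matrix.fromBlocks 0 (-Rᵀ) R 0 with hJ'
  set S' : Matrix (Fin p ⊕ Fin p) (Fin p ⊕ Fin p) ℝ := Matrix.fromBlocks A 0 0 B with hS'
  have hreindex_mul : ∀ M N : Matrix (Fin p ⊕ Fin p) (Fin p ⊕ Fin p) ℝ,
      (Matrix.reindex e e M) * (Matrix.reindex e e N) = Matrix.reindex e e (M * N) := by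
    intro M N
    simp only [Matrix.reindex_apply]
    exact Matrix.submatrix_mul_equiv M N _ e.symm _
  have helim : Sum.elim (sminusR σ) (splusR σ) = σ ∘ ⇑e := by
    funext x; rcases x with i | i <;> rfl
  have hSblock : Matrix.diagonal σ = Matrix.reindex e e S' := by
    rw [hS', hA, hB, Matrix.fromBlocks_diagonal, Matrix.reindex_apply,
      Matrix.submatrix_diagonal_equiv, helim]
    have hc : (σ ∘ ⇑e) ∘ ⇑e.symm = σ := by
      funext j
      show σ (e (e.symm j)) = σ j
      rw [Equiv.apply_symm_apply]
    rw [hc]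
  set J := Matrix.reindex e e J' with hJ
  have hJ'orth : J'ᵀ * J' = 1 := by
    rw [hJ', ← Matrix.fromBlocks_one]
    simp [Matrix.fromBlocks_transpose, Matrix.fromBlocks_multiply, Matrix.transpose_neg,
      Matrix.neg_mul, Matrix.mul_neg, hR1, hR2]
  have hJ'sq : J' * J' = -1 := by
    rw [hJ', show (-1 : Matrix (Fin p ⊕ Fin p) (Fin p ⊕ Fin p) ℝ)
        = Matrix.fromBlocks (-1) 0 0 (-1) by rw [← Matrix.fromBlocks_one, Matrix.fromBlocks_neg, neg_zero]]
    simp [Matrix.fromBlocks_multiply, Matrix.neg_mul, Matrix.mul_neg, hR1, hR2]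
  have hJT : Jᵀ = Matrix.reindex e e J'ᵀ := by rw [hJ, Matrix.transpose_reindex]
  have hJorth : Jᵀ * J = 1 := by
    rw [hJT, hJ, hreindex_mul, hJ'orth]
    simp [Matrix.reindex_apply]
  have hJsq : J * J = -1 := by
    rw [hJ, hreindex_mul, hJ'sq]
    simp [Matrix.reindex_apply, Matrix.submatrix_neg]
  have hJinv : J⁻¹ = Jᵀ := Matrix.inv_eq_left_inv hJorth
  refine ⟨J, hJorth, hJsq, ?_, ?_⟩
  · intro i j hij
    exact hν_anti (show (⟨i.1 / 2, by omega⟩ : Fin p) ≤ ⟨j.1 / 2, by omega⟩ from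
      Nat.div_le_div_right hij)
  · have hM : Matrix.diagonal σ + J⁻¹ * Matrix.diagonal σ * J
        = Matrix.reindex e e (Matrix.fromBlocks (A + Rᵀ * B * R) 0 0 (B + R * A * Rᵀ)) := by
      have hreindex_add : ∀ M N : Matrix (Fin p ⊕ Fin p) (Fin p ⊕ Fin p) ℝ,
          (Matrix.reindex e e M) + (Matrix.reindex e e N) = Matrix.reindex e e (M + N) := by
        intro M N
        simp [Matrix.reindex_apply, Matrix.submatrix_add]
      have hblocksum : S' + J'ᵀ * S' * J'
          = Matrix.fromBlocks (A + Rᵀ * B * R) 0 0 (B + R * A * Rᵀ) := by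
        rw [hS', hJ']
        simp [Matrix.fromBlocks_transpose, Matrix.fromBlocks_multiply, Matrix.fromBlocks_add,
          Matrix.transpose_neg, Matrix.neg_mul, Matrix.mul_neg, Matrix.mul_assoc]
      rw [hJinv, hJT, hSblock, hJ, hreindex_mul, hreindex_mul, hreindex_add, hblocksum]
    rw [hM, Matrix.charpoly_reindex, Matrix.charpoly_fromBlocks_zero₁₂, hcp1, hcp2]
    have hdupl : ∀ i : Fin p, dupR ν (e (Sum.inl i)) = ν i := fun i =>
      congrArg ν (Fin.ext (show 2 * i.1 / 2 = i.1 by omega))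
    have hdupr : ∀ i : Fin p, dupR ν (e (Sum.inr i)) = ν i := fun i =>
      congrArg ν (Fin.ext (show (2 * i.1 + 1) / 2 = i.1 by omega))
    rw [← Equiv.prod_comp e (fun i => Polynomial.X - Polynomial.C (dupR ν i)),
      Fintype.prod_sum_type]
    simp only [hdupl, hdupr]
end

section
/- Let σ = (σ_1 ≥ … ≥ σ_{2p}) be a partition with at most 2p parts. Then τ(σ_+, σ_-) = (2σ_1, 2σ_2, …, 2σ_{2p}) (computed with r = p), and τ(σ, σ) = (2σ_1, 2σ_1, 2σ_2, 2σ_2, …, 2σ_{2p}, 2σ_{2p}) (computed with r = 2p). -/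
/-- A partition: a weakly decreasing, finitely supported sequence of nonnegative
integers (indexed from 0, so `f 0` is the first part `λ₁`). -/
def IsPartition (f : ℕ → ℕ) : Prop := Antitone f ∧ ∃ N, ∀ n, N ≤ n → f n = 0

/-- For `σ = (σ₁ ≥ σ₂ ≥ …)`, `sminus σ = σ₋ = (σ₁, σ₃, σ₅, …)` (0-indexed). -/
def sminus (σ : ℕ → ℕ) : ℕ → ℕ := fun k => σ (2 * k)

/-- For `σ = (σ₁ ≥ σ₂ ≥ …)`, `splus σ = σ₊ = (σ₂, σ₄, σ₆, …)` (0-indexed). -/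
def splus (σ : ℕ → ℕ) : ℕ → ℕ := fun k => σ (2 * k + 1)

/-- `dup ν = ν⁽²⁾ = (ν₁, ν₁, ν₂, ν₂, …)`: every part of `ν` is duplicated. -/
def dup (ν : ℕ → ℕ) : ℕ → ℕ := fun k => ν (k / 2)

/-- Cell `(i, j)` (row `i`, column `j`, 0-based) lies in the skew diagram `ν/λ`. -/
def InSkew (lam ν : ℕ → ℕ) (c : ℕ × ℕ) : Prop := lam c.1 ≤ c.2 ∧ c.2 < ν c.1

/-- `T` is a Littlewood–Richardson filling of shape `ν/λ` and weight `μ`: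
a semistandard skew tableau of shape `ν/λ` (entries `k+1` encode the label `k+1`,
cells outside the shape carry `0`) whose content is `μ` and whose reverse reading
word (rows top to bottom, each row right to left) is a lattice word. -/
def IsLRFilling (lam mu ν : ℕ → ℕ) (T : ℕ × ℕ → ℕ) : Prop :=
  (∀ c, ¬ InSkew lam ν c → T c = 0) ∧
  (∀ c, InSkew lam ν c → 1 ≤ T c) ∧
  (∀ i j j', InSkew lam ν (i, j) → InSkew lam ν (i, j') → j ≤ j' →
    T (i, j) ≤ T (i, j')) ∧
  (∀ i j, InSkew lam ν (i, j) → InSkew lam ν (i + 1, j) → T (i, j) < T (i + 1, j)) ∧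
  (∀ k, Nat.card {c : ℕ × ℕ | T c = k + 1} = mu k) ∧
  (∀ r c k l, k < l →
    Nat.card {x : ℕ × ℕ | T x = l + 1 ∧ (x.1 < r ∨ (x.1 = r ∧ c ≤ x.2))} ≤
    Nat.card {x : ℕ × ℕ | T x = k + 1 ∧ (x.1 < r ∨ (x.1 = r ∧ c ≤ x.2))})

/-- The Littlewood–Richardson coefficient `c^ν_{λμ}`: the number of
Littlewood–Richardson fillings of shape `ν/λ` and weight `μ`. -/
noncomputable def LR (lam mu ν : ℕ → ℕ) : ℕ :=
  Nat.card {T : ℕ × ℕ → ℕ // IsLRFilling lam mu ν T}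

/-- The operation `τ` of Fomin–Fulton–Li–Poon (computed with parameter `r`):
for partitions `λ, μ` with at most `r` parts, the increasing sequence
`I(λ, r) = (λ_r + 1 < … < λ_1 + r)` has elements `λ_{k+1} + r - k` (`k = 0, …, r-1`,
0-indexed parts); `τ(λ, μ)` is the partition with at most `2r` parts whose associated
increasing sequence `I(τ(λ,μ), 2r)` is the increasing rearrangement of
`{2i - 1 : i ∈ I(λ, r)} ∪ {2j : j ∈ I(μ, r)}`. -/
def tauFFLP (r : ℕ) (lam mu : ℕ → ℕ) : ℕ → ℕ := fun m =>
  if m < 2 * r then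
    (((Multiset.range r).map (fun k => 2 * (lam k + (r - k)) - 1) +
      (Multiset.range r).map (fun k => 2 * (mu k + (r - k)))).sort (· ≤ ·)).getD
      (2 * r - 1 - m) 0 - (2 * r - m)
  else 0


lemma interleave_aux (h : ℕ → ℕ) : ∀ n,
    (Multiset.range n).map (fun k => h (2 * k + 1)) +
    (Multiset.range n).map (fun k => h (2 * k)) =
    (Multiset.range (2 * n)).map h := by
  intro n
  induction n with
  | zero => simp
  | succ n ih =>
    have h2 : 2 * (n + 1) = (2 * n + 1) + 1 := by ring
    rw [h2, Multiset.range_succ, Multiset.range_succ, Multiset.range_succ,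
      Multiset.map_cons, Multiset.map_cons, Multiset.map_cons, Multiset.map_cons, ← ih]
    simp only [Multiset.cons_add, Multiset.add_cons]
    rw [Multiset.cons_swap]

lemma sort_of_anti {f : ℕ → ℕ} {n : ℕ}
    (hf : ∀ i j, i < j → j < n → f j < f i) :
    ((Multiset.range n).map f).sort (· ≤ ·) = (List.range n).reverse.map f := by
  have h1 : List.Perm (((Multiset.range n).map f).sort (· ≤ ·)) ((List.range n).map f) := by
    have h0 := Multiset.sort_eq (α := ℕ) ((Multiset.range n).map f) (· ≤ ·)
    have : ((Multiset.range n).map f) = ((List.range n).map f : List ℕ) := by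
      rw [Multiset.range, ← Multiset.map_coe]
    rw [this] at h0
    exact Multiset.coe_eq_coe.mp h0
  have h2 : List.Perm (((Multiset.range n).map f).sort (· ≤ ·))
      ((List.range n).reverse.map f) :=
    h1.trans ((List.reverse_perm _).map f).symm
  refine List.Perm.eq_of_pairwise' (r := (· ≤ ·)) (Multiset.pairwise_sort _ _) ?_ h2
  rw [List.pairwise_map, List.pairwise_reverse]
  refine List.Pairwise.imp_of_mem ?_ (List.pairwise_lt_range (n := n))
  intro a b ha hb hab
  exact le_of_lt (hf a b hab (List.mem_range.mp hb))

lemma sort_getD_of_anti {f : ℕ → ℕ} {n m : ℕ} (hm : m < n)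
    (hf : ∀ i j, i < j → j < n → f j < f i) :
    (((Multiset.range n).map f).sort (· ≤ ·)).getD (n - 1 - m) 0 = f m := by
  rw [sort_of_anti hf]
  have hlen : n - 1 - m < ((List.range n).reverse.map f).length := by
    simp; omega
  rw [List.getD_eq_getElem _ _ hlen]
  simp only [List.getElem_map, List.getElem_reverse, List.getElem_range]
  congr 1
  simp only [List.length_range]
  omega

/-- For a partition `σ = (σ₁ ≥ … ≥ σ_{2p})` with at most `2p`
parts, `τ(σ₊, σ₋) = (2σ₁, 2σ₂, …, 2σ_{2p})` (computed with `r = p`) and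
`τ(σ, σ) = (2σ₁, 2σ₁, 2σ₂, 2σ₂, …, 2σ_{2p}, 2σ_{2p})` (computed with `r = 2p`). -/
theorem tau_of_interlaced (p : ℕ) (σ : ℕ → ℕ)
    (hσ : IsPartition σ) (hσparts : ∀ n, 2 * p ≤ n → σ n = 0) :
    (∀ m, tauFFLP p (splus σ) (sminus σ) m = 2 * σ m) ∧
    (∀ m, tauFFLP (2 * p) σ σ m = 2 * σ (m / 2)) := by
  obtain ⟨hanti, -⟩ := hσ
  constructor
  · -- part 1
    intro m
    set f : ℕ → ℕ := fun n => 2 * σ n + (2 * p - n) with hf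
    have hfanti : ∀ i j, i < j → j < 2 * p → f j < f i := by
      intro i j hij hj
      have := hanti (le_of_lt hij)
      simp only [hf]
      omega
    by_cases hm : m < 2 * p
    · rw [tauFFLP, if_pos hm]
      have hA : (Multiset.range p).map (fun k => 2 * (splus σ k + (p - k)) - 1) =
          (Multiset.range p).map (fun k => f (2 * k + 1)) := by
        apply Multiset.map_congr rfl
        intro k hk
        have hk' : k < p := Multiset.mem_range.mp hk
        simp only [splus, hf]
        omega
      have hB : (Multiset.range p).map (fun k => 2 * (sminus σ k + (p - k))) =
          (Multiset.range p).map (fun k => f (2 * k)) := by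
        apply Multiset.map_congr rfl
        intro k hk
        have hk' : k < p := Multiset.mem_range.mp hk
        simp only [sminus, hf]
        omega
      rw [hA, hB, interleave_aux f p]
      have := sort_getD_of_anti (n := 2 * p) (m := m) hm hfanti
      rw [this]
      simp only [hf]
      omega
    · rw [tauFFLP, if_neg hm]
      rw [hσparts m (by omega)]
  · -- part 2
    intro m
    set f : ℕ → ℕ := fun n => 2 * σ (n / 2) + (2 * (2 * p) - n) with hf
    have hfanti : ∀ i j, i < j → j < 2 * (2 * p) → f j < f i := by
      intro i j hij hj
      have := hanti (Nat.div_le_div_right (c := 2) (le_of_lt hij))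
      simp only [hf]
      omega
    by_cases hm : m < 2 * (2 * p)
    · rw [tauFFLP, if_pos hm]
      have hA : (Multiset.range (2 * p)).map (fun k => 2 * (σ k + (2 * p - k)) - 1) =
          (Multiset.range (2 * p)).map (fun k => f (2 * k + 1)) := by
        apply Multiset.map_congr rfl
        intro k hk
        have hk' : k < 2 * p := Multiset.mem_range.mp hk
        have : (2 * k + 1) / 2 = k := by omega
        simp only [hf, this]
        omega
      have hB : (Multiset.range (2 * p)).map (fun k => 2 * (σ k + (2 * p - k))) =
          (Multiset.range (2 * p)).map (fun k => f (2 * k)) := by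
        apply Multiset.map_congr rfl
        intro k hk
        have hk' : k < 2 * p := Multiset.mem_range.mp hk
        have : (2 * k) / 2 = k := by omega
        simp only [hf, this]
        omega
      rw [hA, hB, interleave_aux f (2 * p)]
      have := sort_getD_of_anti (n := 2 * (2 * p)) (m := m) hm hfanti
      rw [this]
      simp only [hf]
      omega
    · rw [tauFFLP, if_neg hm]
      rw [hσparts (m / 2) (by omega)]
end
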